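/- Let X, Y, Z be mutually independent random variables with X ~ Exp(λ_X), Y ~ Exp(λ_Y), Z ~ Exp(λ_Z), where λ_X, λ_Y, λ_Z > 0. Fix a > 0 (the ratio of source power to relay power) and T > 0. Then lim_{P → ∞} P² · Pr( P·X + f(P·Y, (P/a)·Z) < T ) = (T²/2) · λ_X · (λ_Y + a·λ_Z). In particular, for large source power P_s and relay power P_r = P_s/a, the outage probability of one amplify-and-forward ARQ round with mutual information threshold e^{2R} − 1 = T behaves as (T/P_s)² · λ_X (λ_Y + a λ_Z)/2. -/

import Mathlib

open MeasureTheory ProbabilityTheory Filter Set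

/-- The amplify-and-forward combining function `f(x,y) = x·y/(x+y+1)`. -/
noncomputable def f (x y : ℝ) : ℝ := x * y / (x + y + 1)

open Real

set_option linter.unusedSectionVars false

namespace Thm1Aux

/-! ### Exponential measure values -/

lemma expMeasure_Iic {r : ℝ} (hr : 0 < r) (x : ℝ) :
    expMeasure r (Iic x) = ENNReal.ofReal (if 0 ≤ x then 1 - exp (-(r*x)) else 0) := by
  rw [expMeasure, gammaMeasure, withDensity_apply _ measurableSet_Iic]
  exact lintegral_exponentialPDF_eq_antiDeriv hr x

lemma expMeasure_singleton {r : ℝ} (x : ℝ) : expMeasure r {x} = 0 := by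
  rw [expMeasure, gammaMeasure]
  exact (withDensity_absolutelyContinuous _ _) (measure_singleton x)

lemma expMeasure_Iio {r : ℝ} (hr : 0 < r) (x : ℝ) :
    expMeasure r (Iio x) = ENNReal.ofReal (if 0 ≤ x then 1 - exp (-(r*x)) else 0) := by
  rw [← expMeasure_Iic hr, ← Iic_diff_right, measure_diff_null (expMeasure_singleton x)]

lemma one_sub_exp_nonneg {r t : ℝ} (hr : 0 < r) (ht : 0 ≤ t) : 0 ≤ 1 - exp (-(r*t)) := by
  have : exp (-(r*t)) ≤ 1 := exp_le_one_iff.mpr (by nlinarith)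
  linarith

lemma expMeasure_Ico {r : ℝ} (hr : 0 < r) {u v : ℝ} (hu : 0 ≤ u) (huv : u ≤ v) :
    expMeasure r (Ico u v) = ENNReal.ofReal (exp (-(r*u)) - exp (-(r*v))) := by
  haveI := isProbabilityMeasure_expMeasure hr
  have hd : expMeasure r (Iio v \ Iio u) = expMeasure r (Iio v) - expMeasure r (Iio u) :=
    measure_diff (fun x hx => lt_of_lt_of_le hx huv)
      measurableSet_Iio.nullMeasurableSet (measure_ne_top _ _)
  rw [← (show Iio v \ Iio u = Ico u v by ext x; simp [and_comm]), hd,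
    expMeasure_Iio hr, expMeasure_Iio hr, if_pos hu, if_pos (le_trans hu huv),
    ← ENNReal.ofReal_sub _ (one_sub_exp_nonneg hr hu)]
  congr 1; ring

lemma expMeasure_Ioi {r : ℝ} (hr : 0 < r) {t : ℝ} (ht : 0 ≤ t) :
    expMeasure r (Ioi t) = ENNReal.ofReal (exp (-(r*t))) := by
  haveI := isProbabilityMeasure_expMeasure hr
  rw [← compl_Iic, measure_compl measurableSet_Iic (measure_ne_top _ _), measure_univ,
    expMeasure_Iic hr, if_pos ht, ← ENNReal.ofReal_one,
    ← ENNReal.ofReal_sub _ (one_sub_exp_nonneg hr ht)]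
  congr 1; ring

/-! ### Probability values for exponentially distributed random variables -/

variable {Ω : Type*} [MeasurableSpace Ω] {P : Measure Ω} [IsProbabilityMeasure P]

lemma prob_Iio {A : Ω → ℝ} (hA : Measurable A) {r : ℝ} (hr : 0 < r)
    (hAd : Measure.map A P = expMeasure r) (t : ℝ) :
    P (A ⁻¹' Iio t) = ENNReal.ofReal (if 0 ≤ t then 1 - exp (-(r*t)) else 0) := by
  rw [← Measure.map_apply hA measurableSet_Iio, hAd, expMeasure_Iio hr]

lemma prob_Iio_toReal {A : Ω → ℝ} (hA : Measurable A) {r : ℝ} (hr : 0 < r)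
    (hAd : Measure.map A P = expMeasure r) {t : ℝ} (ht : 0 ≤ t) :
    (P (A ⁻¹' Iio t)).toReal = 1 - exp (-(r*t)) := by
  rw [prob_Iio hA hr hAd, if_pos ht, ENNReal.toReal_ofReal (one_sub_exp_nonneg hr ht)]

lemma prob_Iio_zero {A : Ω → ℝ} (hA : Measurable A) {r : ℝ} (hr : 0 < r)
    (hAd : Measure.map A P = expMeasure r) :
    P (A ⁻¹' Iio 0) = 0 := by
  rw [prob_Iio hA hr hAd]
  simp

lemma prob_Ico_toReal {A : Ω → ℝ} (hA : Measurable A) {r : ℝ} (hr : 0 < r)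
    (hAd : Measure.map A P = expMeasure r) {u v : ℝ} (hu : 0 ≤ u) (huv : u ≤ v) :
    (P (A ⁻¹' Ico u v)).toReal = exp (-(r*u)) - exp (-(r*v)) := by
  rw [← Measure.map_apply hA measurableSet_Ico, hAd, expMeasure_Ico hr hu huv,
    ENNReal.toReal_ofReal (by nlinarith [exp_le_exp.mpr (show -(r*v) ≤ -(r*u) by nlinarith)])]




/-! ### Elementary limits -/

lemma tendsto_exp_div (c : ℝ) : Tendsto (fun p : ℝ => exp (-(c/p))) atTop (nhds 1) := by
  have h : Tendsto (fun p : ℝ => -(c/p)) atTop (nhds 0) := by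
    simpa using (tendsto_const_nhds.div_atTop (tendsto_id (α := ℝ))).neg
  simpa [Function.comp_def] using (Real.continuous_exp.tendsto 0).comp h

lemma tendsto_mul_one_sub_exp {c : ℝ} (hc : 0 ≤ c) :
    Tendsto (fun p : ℝ => p * (1 - exp (-(c/p)))) atTop (nhds c) := by
  rcases eq_or_lt_of_le hc with h | h
  · have : (fun p : ℝ => p * (1 - exp (-(c/p)))) = fun _ => c := by
      funext p; rw [← h]; simp
    rw [this]; exact tendsto_const_nhds
  · have hd : HasDerivAt (fun x : ℝ => 1 - exp (-x)) 1 0 := by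
      have := ((hasDerivAt_id (0:ℝ)).neg.exp).const_sub 1
      simpa using this
    have hslope := hasDerivAt_iff_tendsto_slope.mp hd
    have hcomp : Tendsto (fun p : ℝ => c / p) atTop (nhdsWithin 0 {(0:ℝ)}ᶜ) := by
      refine tendsto_nhdsWithin_of_tendsto_nhds_of_eventually_within _
        (by simpa using tendsto_const_nhds.div_atTop (tendsto_id (α := ℝ))) ?_
      filter_upwards [eventually_gt_atTop 0] with p hp
      exact (ne_of_gt (div_pos h hp))
    have h2 := (hslope.comp hcomp).const_mul c
    refine Tendsto.congr' ?_ (by simpa using h2)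
    filter_upwards [eventually_gt_atTop 0] with p hp
    have hp' : p ≠ 0 := ne_of_gt hp
    have hc' : c ≠ 0 := ne_of_gt h
    simp only [Function.comp, slope, vsub_eq_sub, smul_eq_mul, sub_zero]
    rw [neg_zero, exp_zero]
    field_simp
    ring

/-- Squeeze principle with approximate bounds. -/
lemma tendsto_of_approx (q : ℝ → ℝ) (L : ℝ)
    (h : ∀ δ : ℝ, 0 < δ → ∃ g h' : ℝ → ℝ, ∃ lg lh : ℝ,
      Tendsto g atTop (nhds lg) ∧ Tendsto h' atTop (nhds lh) ∧
      (∀ᶠ p in atTop, g p ≤ q p) ∧ (∀ᶠ p in atTop, q p ≤ h' p) ∧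
      L - δ < lg ∧ lh < L + δ) :
    Tendsto q atTop (nhds L) := by
  refine Metric.tendsto_nhds.mpr fun δ hδ => ?_
  obtain ⟨g, h', lg, lh, hg, hh, h1, h2, h3, h4⟩ := h δ hδ
  have e1 : ∀ᶠ p in atTop, L - δ < g p := hg.eventually (eventually_gt_nhds h3)
  have e2 : ∀ᶠ p in atTop, h' p < L + δ := hh.eventually (eventually_lt_nhds h4)
  filter_upwards [e1, e2, h1, h2] with p hp1 hp2 hp3 hp4
  rw [Real.dist_eq, abs_lt]
  constructor <;> linarith

/-! ### Pointwise facts about `f` -/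

lemma f_nonneg {x y : ℝ} (hx : 0 ≤ x) (hy : 0 ≤ y) : 0 ≤ f x y :=
  div_nonneg (mul_nonneg hx hy) (by linarith)

lemma f_le_min {x y : ℝ} (hx : 0 ≤ x) (hy : 0 ≤ y) : f x y ≤ min x y := by
  rw [le_min_iff]
  constructor <;> rw [f, div_le_iff₀ (by linarith)] <;> nlinarith

lemma f_cases {x y T ε : ℝ} (hx : 0 ≤ x) (hy : 0 ≤ y) (hT : 0 < T)
    (hε0 : 0 < ε) (hε1 : ε < 1) (hfT : f x y < T) :
    (1 - ε) * min x y ≤ f x y ∨ (x < (2*T+2)/ε ∧ y < (2*T+2)/ε) := by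
  have hm : 0 ≤ min x y := le_min hx hy
  have hmM : min x y ≤ max x y := min_le_max
  have hxy1 : x*y = min x y * max x y := (min_mul_max x y).symm
  have hxy2 : x + y = min x y + max x y := (min_add_max x y).symm
  have hpos : 0 < x + y + 1 := by linarith
  by_cases hcase : (1-ε)*(min x y+1) ≤ ε*(max x y)
  · left
    rw [f, le_div_iff₀ hpos, hxy1, hxy2]
    have key : (1-ε)*(min x y + max x y + 1) ≤ max x y := by nlinarith
    nlinarith [mul_le_mul_of_nonneg_left key hm]
  · right
    push_neg at hcase
    have hmlt : min x y < 2*T+1 := by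
      by_contra hge
      push_neg at hge
      have hfg : T ≤ f x y := by
        rw [f, le_div_iff₀ hpos, hxy1, hxy2]
        have hM : 2*T+1 ≤ max x y := le_trans hge hmM
        nlinarith [mul_le_mul_of_nonneg_right hge (show (0:ℝ) ≤ max x y by linarith),
          mul_le_mul_of_nonneg_left hmM hT.le]
      linarith
    have hM : max x y < (2*T+2)/ε := by
      rw [lt_div_iff₀ hε0]
      nlinarith
    exact ⟨lt_of_le_of_lt (le_max_left x y) hM, lt_of_le_of_lt (le_max_right x y) hM⟩

set_option maxHeartbeats 1000000 in
lemma keylim {Ω : Type*} [MeasurableSpace Ω] {P : Measure Ω} [IsProbabilityMeasure P]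
    {A B : Ω → ℝ} (hA : Measurable A) (hB : Measurable B)
    {α β : ℝ} (hα : 0 < α) (hβ : 0 < β)
    (hAd : Measure.map A P = expMeasure α) (hBd : Measure.map B P = expMeasure β)
    (hAB : IndepFun A B P) {T : ℝ} (hT : 0 < T) :
    Tendsto (fun p : ℝ => p ^ 2 * (P {ω | A ω + B ω < T / p}).toReal) atTop
      (nhds (T ^ 2 / 2 * α * β)) := by
  set L := T ^ 2 / 2 * α * β with hL
  have hL0 : 0 < L := by rw [hL]; positivity
  refine tendsto_of_approx _ _ fun δ hδ => ?_
  obtain ⟨n, hn⟩ := exists_nat_gt (α * β * T ^ 2 / (2 * δ))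
  have hbpos : 0 < α * β * T ^ 2 / (2 * δ) := by positivity
  have hn0 : (0:ℝ) < n := lt_trans hbpos hn
  have hnn : n ≠ 0 := by exact_mod_cast hn0.ne'
  have hnne : (n:ℝ) ≠ 0 := hn0.ne'
  set c : ℕ → ℝ := fun i => α * T * i / n with hc
  set d : ℕ → ℝ := fun i => β * T * ((n:ℝ) - i - 1) / n with hd
  set d' : ℕ → ℝ := fun i => β * T * ((n:ℝ) - i) / n with hd'
  have hdnn : ∀ i ∈ Finset.range n, 0 ≤ d i := by
    intro i hi
    have h1 : (i:ℝ) + 1 ≤ n := by exact_mod_cast Finset.mem_range.mp hi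
    have h2 : (0:ℝ) ≤ (n:ℝ) - i - 1 := by linarith
    rw [hd]
    positivity
  have hd'nn : ∀ i ∈ Finset.range n, 0 ≤ d' i := by
    intro i hi
    have h1 : (i:ℝ) + 1 ≤ n := by exact_mod_cast Finset.mem_range.mp hi
    have h2 : (0:ℝ) ≤ (n:ℝ) - i := by linarith
    rw [hd']
    positivity
  have hΔ : (0:ℝ) ≤ α * T / n := by positivity
  have key_tendsto : ∀ e : ℕ → ℝ, (∀ i ∈ Finset.range n, 0 ≤ e i) →
      Tendsto (fun p : ℝ => p ^ 2 * ∑ i ∈ Finset.range n,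
        (exp (-(c i / p)) - exp (-(c (i+1) / p))) * (1 - exp (-(e i / p)))) atTop
        (nhds (∑ i ∈ Finset.range n, 1 * (α * T / n) * e i)) := by
    intro e he
    have heq : ∀ p : ℝ, p ^ 2 * ∑ i ∈ Finset.range n,
        (exp (-(c i / p)) - exp (-(c (i+1) / p))) * (1 - exp (-(e i / p)))
        = ∑ i ∈ Finset.range n,
          exp (-(c i / p)) * (p * (1 - exp (-((α * T / n) / p))))
            * (p * (1 - exp (-(e i / p)))) := by
      intro p
      rw [Finset.mul_sum]
      refine Finset.sum_congr rfl fun i _ => ?_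
      have hce : exp (-(c (i+1) / p)) = exp (-(c i / p)) * exp (-((α * T / n) / p)) := by
        rw [← Real.exp_add]
        congr 1
        simp only [hc]
        push_cast
        ring
      rw [hce]; ring
    refine Tendsto.congr (fun p => (heq p).symm) (tendsto_finset_sum _ fun i hi => ?_)
    exact ((tendsto_exp_div (c i)).mul (tendsto_mul_one_sub_exp hΔ)).mul
      (tendsto_mul_one_sub_exp (he i hi))
  -- Gauss sum
  have h2 : (∑ i ∈ Finset.range n, (i:ℝ)) = (n:ℝ)*((n:ℝ)-1)/2 := by
    have h3 := congrArg (Nat.cast (R := ℝ)) (Finset.sum_range_id_mul_two n)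
    push_cast [Nat.cast_sub (Nat.one_le_iff_ne_zero.mpr hnn)] at h3
    linarith
  have hsumd : ∑ i ∈ Finset.range n, 1 * (α * T / n) * d i = L - L/n := by
    calc ∑ i ∈ Finset.range n, 1 * (α * T / n) * d i
        = ∑ i ∈ Finset.range n, (α*β*T^2/((n:ℝ)*n)) * (((n:ℝ)-1) - i) := by
          refine Finset.sum_congr rfl fun i _ => ?_
          simp only [hd]; ring
      _ = (α*β*T^2/((n:ℝ)*n)) * ((n:ℝ)*((n:ℝ)-1) - (n:ℝ)*((n:ℝ)-1)/2) := by
          rw [← Finset.mul_sum, Finset.sum_sub_distrib, Finset.sum_const,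
            Finset.card_range, nsmul_eq_mul, h2]
      _ = L - L/n := by rw [hL]; field_simp; ring
  have hsumd' : ∑ i ∈ Finset.range n, 1 * (α * T / n) * d' i = L + L/n := by
    calc ∑ i ∈ Finset.range n, 1 * (α * T / n) * d' i
        = ∑ i ∈ Finset.range n, (α*β*T^2/((n:ℝ)*n)) * ((n:ℝ) - i) := by
          refine Finset.sum_congr rfl fun i _ => ?_
          simp only [hd']; ring
      _ = (α*β*T^2/((n:ℝ)*n)) * ((n:ℝ)*(n:ℝ) - (n:ℝ)*((n:ℝ)-1)/2) := by
          rw [← Finset.mul_sum, Finset.sum_sub_distrib, Finset.sum_const,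
            Finset.card_range, nsmul_eq_mul, h2]
      _ = L + L/n := by rw [hL]; field_simp; ring
  have hLn : L / n < δ := by
    rw [div_lt_iff₀ hn0]
    have h4 := (div_lt_iff₀ (by positivity : (0:ℝ) < 2*δ)).mp hn
    rw [hL]
    nlinarith
  refine ⟨fun p => p ^ 2 * ∑ i ∈ Finset.range n,
      (exp (-(c i / p)) - exp (-(c (i+1) / p))) * (1 - exp (-(d i / p))),
    fun p => p ^ 2 * ∑ i ∈ Finset.range n,
      (exp (-(c i / p)) - exp (-(c (i+1) / p))) * (1 - exp (-(d' i / p))),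
    ∑ i ∈ Finset.range n, 1 * (α * T / n) * d i,
    ∑ i ∈ Finset.range n, 1 * (α * T / n) * d' i,
    key_tendsto d hdnn, key_tendsto d' hd'nn, ?_, ?_, ?_, ?_⟩
  · -- lower bound eventually
    filter_upwards [eventually_gt_atTop 0] with p hp
    set s := T / p with hs
    have hs0 : 0 < s := div_pos hT hp
    set t : ℕ → ℝ := fun i => i * T / (n * p) with ht
    have htmono : ∀ {k l : ℕ}, k ≤ l → t k ≤ t l := by
      intro k l hkl
      have hkl' : (k:ℝ) ≤ l := by exact_mod_cast hkl
      simp only [ht]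
      exact (div_le_div_iff_of_pos_right (by positivity)).mpr (mul_le_mul_of_nonneg_right hkl' hT.le)
    have ht0 : ∀ i : ℕ, 0 ≤ t i := by
      intro i; simp only [ht]; positivity
    have htn : ∀ i : ℕ, i ≤ n → t i ≤ s := by
      intro i hi
      have h1 : t i ≤ t n := htmono hi
      have h2 : t n = s := by simp only [ht, hs]; field_simp
      linarith
    have hts : ∀ i : ℕ, α * t i = c i / p := by
      intro i; simp only [ht, hc]; ring
    have htd : ∀ i : ℕ, β * (s - t (i+1)) = d i / p := by
      intro i; simp only [ht, hd, hs]; push_cast; field_simp; ring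
    have hterm : ∀ (w : ℝ), 0 ≤ w → ∀ i : ℕ,
        (P (A ⁻¹' Ico (t i) (t (i+1)) ∩ B ⁻¹' Iio w)).toReal
        = (exp (-(α * t i)) - exp (-(α * t (i+1)))) * (1 - exp (-(β * w))) := by
      intro w hw i
      rw [hAB.measure_inter_preimage_eq_mul _ _ measurableSet_Ico measurableSet_Iio,
        ENNReal.toReal_mul, prob_Ico_toReal hA hα hAd (ht0 i) (htmono (Nat.le_succ i)),
        prob_Iio_toReal hB hβ hBd hw]
    refine mul_le_mul_of_nonneg_left ?_ (by positivity : (0:ℝ) ≤ p^2)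
    calc ∑ i ∈ Finset.range n, (exp (-(c i / p)) - exp (-(c (i+1) / p))) * (1 - exp (-(d i / p)))
        = ∑ i ∈ Finset.range n,
            (P (A ⁻¹' Ico (t i) (t (i+1)) ∩ B ⁻¹' Iio (s - t (i+1)))).toReal := by
          refine Finset.sum_congr rfl fun i hi => ?_
          have hw : 0 ≤ s - t (i+1) := by
            have := htn (i+1) (Finset.mem_range.mp hi)
            linarith
          rw [hterm _ hw i, hts i, hts (i+1), htd i]
      _ = (P (⋃ i ∈ Finset.range n,
            A ⁻¹' Ico (t i) (t (i+1)) ∩ B ⁻¹' Iio (s - t (i+1)))).toReal := by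
          rw [measure_biUnion_finset ?_ (fun b _ =>
            (hA measurableSet_Ico).inter (hB measurableSet_Iio)),
            ENNReal.toReal_sum (fun i _ => measure_ne_top _ _)]
          intro i _ j _ hij
          refine Set.disjoint_left.mpr fun ω hωi hωj => ?_
          simp only [mem_inter_iff, mem_preimage, mem_Ico, mem_Iio] at hωi hωj
          rcases hij.lt_or_gt with h | h
          · exact absurd (lt_of_lt_of_le hωi.1.2 (htmono h)) (not_lt.mpr hωj.1.1)
          · exact absurd (lt_of_lt_of_le hωj.1.2 (htmono h)) (not_lt.mpr hωi.1.1)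
      _ ≤ (P {ω | A ω + B ω < s}).toReal := by
          refine ENNReal.toReal_mono (measure_ne_top _ _) (measure_mono ?_)
          intro ω hω
          simp only [mem_iUnion, mem_inter_iff, mem_preimage, mem_Ico, mem_Iio] at hω
          obtain ⟨i, hi, ⟨hA1, hA2⟩, hB1⟩ := hω
          simp only [mem_setOf_eq]
          linarith
  · -- upper bound eventually
    filter_upwards [eventually_gt_atTop 0] with p hp
    set s := T / p with hs
    have hs0 : 0 < s := div_pos hT hp
    set t : ℕ → ℝ := fun i => i * T / (n * p) with ht
    have htmono : ∀ {k l : ℕ}, k ≤ l → t k ≤ t l := by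
      intro k l hkl
      have hkl' : (k:ℝ) ≤ l := by exact_mod_cast hkl
      simp only [ht]
      exact (div_le_div_iff_of_pos_right (by positivity)).mpr (mul_le_mul_of_nonneg_right hkl' hT.le)
    have ht0 : ∀ i : ℕ, 0 ≤ t i := by intro i; simp only [ht]; positivity
    have htn : ∀ i : ℕ, i ≤ n → t i ≤ s := by
      intro i hi
      have h1 : t i ≤ t n := htmono hi
      have h2 : t n = s := by simp only [ht, hs]; field_simp
      linarith
    have hts : ∀ i : ℕ, α * t i = c i / p := by intro i; simp only [ht, hc]; ring
    have htd' : ∀ i : ℕ, β * (s - t i) = d' i / p := by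
      intro i; simp only [ht, hd', hs]; push_cast; field_simp
    have hterm : ∀ (w : ℝ), 0 ≤ w → ∀ i : ℕ,
        (P (A ⁻¹' Ico (t i) (t (i+1)) ∩ B ⁻¹' Iio w)).toReal
        = (exp (-(α * t i)) - exp (-(α * t (i+1)))) * (1 - exp (-(β * w))) := by
      intro w hw i
      rw [hAB.measure_inter_preimage_eq_mul _ _ measurableSet_Ico measurableSet_Iio,
        ENNReal.toReal_mul, prob_Ico_toReal hA hα hAd (ht0 i) (htmono (Nat.le_succ i)),
        prob_Iio_toReal hB hβ hBd hw]
    refine mul_le_mul_of_nonneg_left ?_ (by positivity : (0:ℝ) ≤ p^2)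
    have hsub : {ω | A ω + B ω < s} ⊆
        (⋃ i ∈ Finset.range n, A ⁻¹' Ico (t i) (t (i+1)) ∩ B ⁻¹' Iio (s - t i))
          ∪ (A ⁻¹' Iio 0 ∪ B ⁻¹' Iio 0) := by
      intro ω hω
      simp only [mem_setOf_eq] at hω
      by_cases hA0 : A ω < 0
      · exact Or.inr (Or.inl hA0)
      by_cases hB0 : B ω < 0
      · exact Or.inr (Or.inr hB0)
      push_neg at hA0 hB0
      left
      have hAs : A ω < s := by linarith
      have hAp : A ω * p < T := by rw [hs] at hAs; exact (lt_div_iff₀ hp).mp hAs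
      set x := A ω * n * p / T with hx
      have hx0 : 0 ≤ x := by
        rw [hx]
        exact div_nonneg (mul_nonneg (mul_nonneg hA0 hn0.le) hp.le) hT.le
      have h1 : (⌊x⌋₊ : ℝ) ≤ x := Nat.floor_le hx0
      have hfl2 : x < ⌊x⌋₊ + 1 := Nat.lt_floor_add_one x
      rw [hx] at h1 hfl2
      have hin : ⌊x⌋₊ < n := by
        rw [Nat.floor_lt hx0, hx, div_lt_iff₀ hT]
        nlinarith [mul_lt_mul_of_pos_left hAp hn0]
      have hti : t ⌊x⌋₊ ≤ A ω := by
        simp only [ht]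
        rw [div_le_iff₀ (by positivity)]
        have h4 := mul_le_mul_of_nonneg_right h1 hT.le
        rw [div_mul_cancel₀ _ (ne_of_gt hT)] at h4
        nlinarith
      simp only [mem_iUnion, mem_inter_iff, mem_preimage, mem_Ico, mem_Iio]
      refine ⟨⌊x⌋₊, Finset.mem_range.mpr hin, ⟨hti, ?_⟩, ?_⟩
      · simp only [ht]
        rw [lt_div_iff₀ (by positivity)]
        have h5 := (div_lt_iff₀ hT).mp hfl2
        push_cast
        nlinarith
      · linarith
    calc (P {ω | A ω + B ω < s}).toReal
        ≤ (∑ i ∈ Finset.range n,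
            P (A ⁻¹' Ico (t i) (t (i+1)) ∩ B ⁻¹' Iio (s - t i))).toReal := by
          refine ENNReal.toReal_mono (by
            exact (ENNReal.sum_lt_top.mpr fun i _ => measure_lt_top P _).ne) ?_
          calc P {ω | A ω + B ω < s}
              ≤ P ((⋃ i ∈ Finset.range n, A ⁻¹' Ico (t i) (t (i+1)) ∩ B ⁻¹' Iio (s - t i))
                ∪ (A ⁻¹' Iio 0 ∪ B ⁻¹' Iio 0)) := measure_mono hsub
            _ ≤ P (⋃ i ∈ Finset.range n, A ⁻¹' Ico (t i) (t (i+1)) ∩ B ⁻¹' Iio (s - t i))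
                + P (A ⁻¹' Iio 0 ∪ B ⁻¹' Iio 0) := measure_union_le _ _
            _ = P (⋃ i ∈ Finset.range n, A ⁻¹' Ico (t i) (t (i+1)) ∩ B ⁻¹' Iio (s - t i)) := by
                rw [measure_union_null (prob_Iio_zero hA hα hAd) (prob_Iio_zero hB hβ hBd),
                  add_zero]
            _ ≤ ∑ i ∈ Finset.range n, P (A ⁻¹' Ico (t i) (t (i+1)) ∩ B ⁻¹' Iio (s - t i)) :=
                measure_biUnion_finset_le _ _
      _ = ∑ i ∈ Finset.range n,
            (P (A ⁻¹' Ico (t i) (t (i+1)) ∩ B ⁻¹' Iio (s - t i))).toReal :=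
          ENNReal.toReal_sum (fun i _ => measure_ne_top _ _)
      _ = ∑ i ∈ Finset.range n,
            (exp (-(c i / p)) - exp (-(c (i+1) / p))) * (1 - exp (-(d' i / p))) := by
          refine Finset.sum_congr rfl fun i hi => ?_
          have hw : 0 ≤ s - t i := by
            have := htn i (le_of_lt (Finset.mem_range.mp hi))
            linarith
          rw [hterm _ hw i, hts i, hts (i+1), htd' i]
  · rw [hsumd]; linarith
  · rw [hsumd']; linarith

lemma map_const_mul {Ω : Type*} [MeasurableSpace Ω] {P : Measure Ω} [IsProbabilityMeasure P]
    {B : Ω → ℝ} (hB : Measurable B) {β k : ℝ} (hβ : 0 < β) (hk : 0 < k)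
    (hBd : Measure.map B P = expMeasure β) :
    Measure.map (fun ω => k * B ω) P = expMeasure (β / k) := by
  haveI := isProbabilityMeasure_expMeasure (div_pos hβ hk)
  refine Measure.ext_of_Iic _ _ fun x => ?_
  rw [Measure.map_apply (hB.const_mul k) measurableSet_Iic]
  have hpre : (fun ω => k * B ω) ⁻¹' Iic x = B ⁻¹' Iic (x/k) := by
    ext ω
    simp only [mem_preimage, mem_Iic]
    rw [le_div_iff₀ hk, mul_comm]
  rw [hpre, ← Measure.map_apply hB measurableSet_Iic, hBd, expMeasure_Iic hβ,
    expMeasure_Iic (div_pos hβ hk)]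
  have hiff : 0 ≤ x / k ↔ 0 ≤ x := by rw [le_div_iff₀ hk, zero_mul]
  rcases le_or_gt 0 x with h | h
  · rw [if_pos (hiff.mpr h), if_pos h,
      show β * (x / k) = β / k * x by ring]
  · rw [if_neg (by rw [hiff]; exact not_le.mpr h), if_neg (not_le.mpr h)]

lemma map_min {Ω : Type*} [MeasurableSpace Ω] {P : Measure Ω} [IsProbabilityMeasure P]
    {Y Z : Ω → ℝ} (hY : Measurable Y) (hZ : Measurable Z)
    {lamY lamZ a : ℝ} (hlamY : 0 < lamY) (hlamZ : 0 < lamZ) (ha : 0 < a)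
    (hYd : Measure.map Y P = expMeasure lamY) (hZd : Measure.map Z P = expMeasure lamZ)
    (hYZ : IndepFun Y Z P) :
    Measure.map (fun ω => min (Y ω) (Z ω / a)) P = expMeasure (lamY + a * lamZ) := by
  have hμ : 0 < lamY + a * lamZ := by positivity
  haveI := isProbabilityMeasure_expMeasure hμ
  have hW : Measurable fun ω => min (Y ω) (Z ω / a) := hY.min (hZ.div_const a)
  refine Measure.ext_of_Iic _ _ fun x => ?_
  rw [Measure.map_apply hW measurableSet_Iic]
  rcases le_or_gt 0 x with hx | hx
  · have hpre : (fun ω => min (Y ω) (Z ω / a)) ⁻¹' Iic x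
        = (Y ⁻¹' Ioi x ∩ Z ⁻¹' Ioi (a * x))ᶜ := by
      ext ω
      simp only [mem_preimage, mem_Iic, mem_compl_iff, mem_inter_iff, mem_Ioi, not_and_or,
        not_lt, min_le_iff]
      constructor
      · rintro (h | h)
        · exact Or.inl h
        · right
          rw [div_le_iff₀ ha] at h
          nlinarith
      · rintro (h | h)
        · exact Or.inl h
        · right
          rw [div_le_iff₀ ha]
          nlinarith
    rw [hpre, measure_compl ((hY measurableSet_Ioi).inter (hZ measurableSet_Ioi))
        (measure_ne_top _ _), measure_univ,
      hYZ.measure_inter_preimage_eq_mul _ _ measurableSet_Ioi measurableSet_Ioi,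
      ← Measure.map_apply hY measurableSet_Ioi, ← Measure.map_apply hZ measurableSet_Ioi,
      hYd, hZd, expMeasure_Ioi hlamY hx, expMeasure_Ioi hlamZ (by positivity : (0:ℝ) ≤ a*x),
      expMeasure_Iic hμ, if_pos hx,
      ← ENNReal.ofReal_mul (exp_nonneg _), ← Real.exp_add, ← ENNReal.ofReal_one,
      ← ENNReal.ofReal_sub _ (exp_nonneg _)]
    congr 1
    rw [show -(lamY*x) + -(lamZ*(a*x)) = -((lamY + a*lamZ)*x) by ring]
  · have h1 : P ((fun ω => min (Y ω) (Z ω / a)) ⁻¹' Iic x) = 0 := by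
      have hsub : (fun ω => min (Y ω) (Z ω / a)) ⁻¹' Iic x ⊆ Y ⁻¹' Iio 0 ∪ Z ⁻¹' Iio 0 := by
        intro ω hω
        simp only [mem_preimage, mem_Iic, min_le_iff] at hω
        simp only [mem_union, mem_preimage, mem_Iio]
        rcases hω with h | h
        · exact Or.inl (lt_of_le_of_lt h hx)
        · right
          rw [div_le_iff₀ ha] at h
          nlinarith
      exact measure_mono_null hsub
        (measure_union_null (prob_Iio_zero hY hlamY hYd) (prob_Iio_zero hZ hlamZ hZd))
    rw [h1, expMeasure_Iic hμ, if_neg (not_le.mpr hx), ENNReal.ofReal_zero]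

end Thm1Aux

open Thm1Aux

set_option maxHeartbeats 1000000

/-- **Theorem 1 of the paper, in terms of exponential rates.**
For mutually independent `X ~ Exp(λ_X)`, `Y ~ Exp(λ_Y)`, `Z ~ Exp(λ_Z)`, a fixed
power ratio `a > 0` and threshold `T > 0`,
`lim_{P → ∞} P² · Pr( P·X + f(P·Y, (P/a)·Z) < T ) = (T²/2)·λ_X·(λ_Y + a·λ_Z)`. -/
theorem theorem1_outage_asymptotics
    {Ω : Type*} [MeasurableSpace Ω] (P : Measure Ω) [IsProbabilityMeasure P]
    (lamX lamY lamZ : ℝ) (hlamX : 0 < lamX) (hlamY : 0 < lamY) (hlamZ : 0 < lamZ)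
    (X Y Z : Ω → ℝ) (hX : Measurable X) (hY : Measurable Y) (hZ : Measurable Z)
    (hXdist : Measure.map X P = expMeasure lamX)
    (hYdist : Measure.map Y P = expMeasure lamY)
    (hZdist : Measure.map Z P = expMeasure lamZ)
    (hindep : iIndepFun ![X, Y, Z] P)
    (a T : ℝ) (ha : 0 < a) (hT : 0 < T) :
    Tendsto
      (fun p : ℝ => p ^ 2 *
        (P {ω | p * X ω + f (p * Y ω) ((p / a) * Z ω) < T}).toReal)
      atTop (nhds (T ^ 2 / 2 * lamX * (lamY + a * lamZ))) := by
  classical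
  have hmeas : ∀ i, Measurable (![X, Y, Z] i) := by
    intro i
    fin_cases i
    · simpa using hX
    · simpa using hY
    · simpa using hZ
  have hYZ : IndepFun Y Z P := by
    have h := hindep.indepFun (show (1 : Fin 3) ≠ 2 by decide)
    simpa using h
  have hYZX : IndepFun (fun ω => (Y ω, Z ω)) X P := by
    have h := hindep.indepFun_prodMk hmeas 1 2 0 (by decide) (by decide)
    simpa using h
  set μ := lamY + a * lamZ with hμdef
  have hμ : 0 < μ := by rw [hμdef]; positivity
  set W : Ω → ℝ := fun ω => min (Y ω) (Z ω / a) with hWdef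
  have hWmeas : Measurable W := hY.min (hZ.div_const a)
  have hWd : Measure.map W P = expMeasure μ :=
    map_min hY hZ hlamY hlamZ ha hYdist hZdist hYZ
  have hXW : IndepFun X W P :=
    (hYZX.comp (measurable_fst.min (measurable_snd.div_const a)) measurable_id).symm
  set L := T ^ 2 / 2 * lamX * μ with hLdef
  have hL0 : 0 < L := by rw [hLdef]; positivity
  refine tendsto_of_approx _ _ fun δ hδ => ?_
  set ε := δ / (2 * (L + δ)) with hεdef
  have hε0 : 0 < ε := by rw [hεdef]; positivity
  have hε1 : ε < 1 := by
    rw [hεdef, div_lt_one (by positivity)]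
    linarith
  have h1ε : 0 < 1 - ε := by linarith
  set K := (2 * T + 2) / ε with hKdef
  have hK0 : 0 < K := by rw [hKdef]; positivity
  set Wε : Ω → ℝ := fun ω => (1 - ε) * W ω with hWε
  have hWεmeas : Measurable Wε := hWmeas.const_mul _
  have hWεd : Measure.map Wε P = expMeasure (μ / (1 - ε)) :=
    map_const_mul hWmeas hμ h1ε hWd
  have hXWε : IndepFun X Wε P := by
    have h := hYZX.comp
      (show Measurable fun q : ℝ × ℝ => (1 - ε) * min q.1 (q.2 / a) from
        (measurable_fst.min (measurable_snd.div_const a)).const_mul _) measurable_id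
    exact h.symm
  have hN : P (X ⁻¹' Iio 0 ∪ (Y ⁻¹' Iio 0 ∪ Z ⁻¹' Iio 0)) = 0 :=
    measure_union_null (prob_Iio_zero hX hlamX hXdist)
      (measure_union_null (prob_Iio_zero hY hlamY hYdist)
        (prob_Iio_zero hZ hlamZ hZdist))
  refine ⟨fun p => p ^ 2 * (P {ω | X ω + W ω < T / p}).toReal,
    fun p => p ^ 2 * (P {ω | X ω + Wε ω < T / p}).toReal
      + p ^ 2 * (P ((fun ω => (Y ω, Z ω)) ⁻¹' (Iio (K / p) ×ˢ Iio (a * K / p))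
          ∩ X ⁻¹' Iio (T / p))).toReal,
    L, L / (1 - ε) + 0, ?_, ?_, ?_, ?_, by linarith, ?_⟩
  · -- Tendsto of lower bound
    have h := keylim hX hWmeas hlamX hμ hXdist hWd hXW hT
    rw [hLdef]
    exact h
  · -- Tendsto of upper bound
    have h1 := keylim hX hWεmeas hlamX (div_pos hμ h1ε) hXdist hWεd hXWε hT
    have h2 : Tendsto (fun p : ℝ => p ^ 2 *
        (P ((fun ω => (Y ω, Z ω)) ⁻¹' (Iio (K / p) ×ˢ Iio (a * K / p))
          ∩ X ⁻¹' Iio (T / p))).toReal) atTop (nhds 0) := by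
      have hlim := (((tendsto_mul_one_sub_exp (show (0:ℝ) ≤ lamY * K by positivity)).mul
        (tendsto_mul_one_sub_exp (show (0:ℝ) ≤ lamZ * (a * K) by positivity))).mul
        (tendsto_mul_one_sub_exp (show (0:ℝ) ≤ lamX * T by positivity))).div_atTop
        (tendsto_id (α := ℝ))
      refine Tendsto.congr' ?_ hlim
      filter_upwards [eventually_gt_atTop 0] with p hp
      rw [hYZX.measure_inter_preimage_eq_mul _ _
          (measurableSet_Iio.prod measurableSet_Iio) measurableSet_Iio,
        Set.mk_preimage_prod, hYZ.measure_inter_preimage_eq_mul _ _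
          measurableSet_Iio measurableSet_Iio,
        ENNReal.toReal_mul, ENNReal.toReal_mul,
        prob_Iio_toReal hY hlamY hYdist (le_of_lt (div_pos hK0 hp)),
        prob_Iio_toReal hZ hlamZ hZdist (by positivity),
        prob_Iio_toReal hX hlamX hXdist (le_of_lt (div_pos hT hp)),
        show lamY * (K / p) = lamY * K / p by ring,
        show lamZ * (a * K / p) = lamZ * (a * K) / p by ring,
        show lamX * (T / p) = lamX * T / p by ring]
      simp only [id]
      field_simp
    have h3 := h1.add h2
    rw [show L / (1 - ε) = T ^ 2 / 2 * lamX * (μ / (1 - ε)) by rw [hLdef]; ring]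
    simpa using h3
  · -- lower sandwich
    filter_upwards [eventually_gt_atTop 0] with p hp
    have hsub : {ω | X ω + W ω < T / p} ⊆
        {ω | p * X ω + f (p * Y ω) (p / a * Z ω) < T}
          ∪ (X ⁻¹' Iio 0 ∪ (Y ⁻¹' Iio 0 ∪ Z ⁻¹' Iio 0)) := by
      intro ω hω
      simp only [mem_setOf_eq] at hω
      by_cases h1 : X ω < 0
      · exact Or.inr (Or.inl h1)
      by_cases h2 : Y ω < 0
      · exact Or.inr (Or.inr (Or.inl h2))
      by_cases h3 : Z ω < 0
      · exact Or.inr (Or.inr (Or.inr h3))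
      push_neg at h1 h2 h3
      left
      simp only [mem_setOf_eq]
      have hy' : 0 ≤ p * Y ω := mul_nonneg hp.le h2
      have hz' : 0 ≤ p / a * Z ω := mul_nonneg (by positivity) h3
      have hmin : min (p * Y ω) (p / a * Z ω) = p * W ω := by
        simp only [hWdef]
        rw [show p / a * Z ω = p * (Z ω / a) by ring, mul_min_of_nonneg _ _ hp.le]
      have h4 := f_le_min hy' hz'
      have h5 : p * X ω + p * W ω < T := by
        have h6 := (lt_div_iff₀ hp).mp hω
        calc p * X ω + p * W ω = (X ω + W ω) * p := by ring
          _ < T := h6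
      calc p * X ω + f (p * Y ω) (p / a * Z ω)
          ≤ p * X ω + min (p * Y ω) (p / a * Z ω) := by linarith
        _ = p * X ω + p * W ω := by rw [hmin]
        _ < T := h5
    refine mul_le_mul_of_nonneg_left ?_ (by positivity : (0:ℝ) ≤ p ^ 2)
    refine ENNReal.toReal_mono (measure_ne_top _ _) ?_
    calc P {ω | X ω + W ω < T / p}
        ≤ P ({ω | p * X ω + f (p * Y ω) (p / a * Z ω) < T}
            ∪ (X ⁻¹' Iio 0 ∪ (Y ⁻¹' Iio 0 ∪ Z ⁻¹' Iio 0))) := measure_mono hsub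
      _ ≤ P {ω | p * X ω + f (p * Y ω) (p / a * Z ω) < T}
            + P (X ⁻¹' Iio 0 ∪ (Y ⁻¹' Iio 0 ∪ Z ⁻¹' Iio 0)) := measure_union_le _ _
      _ = P {ω | p * X ω + f (p * Y ω) (p / a * Z ω) < T} := by rw [hN, add_zero]
  · -- upper sandwich
    filter_upwards [eventually_gt_atTop 0] with p hp
    have hsub : {ω | p * X ω + f (p * Y ω) (p / a * Z ω) < T} ⊆
        ({ω | X ω + Wε ω < T / p}
          ∪ ((fun ω => (Y ω, Z ω)) ⁻¹' (Iio (K / p) ×ˢ Iio (a * K / p))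
              ∩ X ⁻¹' Iio (T / p)))
          ∪ (X ⁻¹' Iio 0 ∪ (Y ⁻¹' Iio 0 ∪ Z ⁻¹' Iio 0)) := by
      intro ω hω
      simp only [mem_setOf_eq] at hω
      by_cases h1 : X ω < 0
      · exact Or.inr (Or.inl h1)
      by_cases h2 : Y ω < 0
      · exact Or.inr (Or.inr (Or.inl h2))
      by_cases h3 : Z ω < 0
      · exact Or.inr (Or.inr (Or.inr h3))
      push_neg at h1 h2 h3
      left
      have hy' : 0 ≤ p * Y ω := mul_nonneg hp.le h2
      have hz' : 0 ≤ p / a * Z ω := mul_nonneg (by positivity) h3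
      have hx' : 0 ≤ p * X ω := mul_nonneg hp.le h1
      have hfT : f (p * Y ω) (p / a * Z ω) < T := by linarith
      have hmin : min (p * Y ω) (p / a * Z ω) = p * W ω := by
        simp only [hWdef]
        rw [show p / a * Z ω = p * (Z ω / a) by ring, mul_min_of_nonneg _ _ hp.le]
      rcases f_cases hy' hz' hT hε0 hε1 hfT with hcase | hcase
      · left
        simp only [mem_setOf_eq]
        rw [lt_div_iff₀ hp]
        rw [hmin] at hcase
        have he : (X ω + Wε ω) * p = p * X ω + (1 - ε) * (p * W ω) := by
          simp only [hWε]; ring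
        rw [he]
        linarith
      · right
        rw [← hKdef] at hcase
        obtain ⟨hy, hz⟩ := hcase
        simp only [mem_inter_iff, mem_preimage, Set.mem_prod, mem_Iio]
        refine ⟨⟨?_, ?_⟩, ?_⟩
        · rw [lt_div_iff₀ hp]; nlinarith
        · rw [lt_div_iff₀ hp]
          rw [show p / a * Z ω = p * Z ω / a by ring, div_lt_iff₀ ha] at hz
          nlinarith
        · rw [lt_div_iff₀ hp]
          have hf0 := f_nonneg hy' hz'
          nlinarith
    have hm : (P {ω | p * X ω + f (p * Y ω) (p / a * Z ω) < T}).toReal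
        ≤ (P {ω | X ω + Wε ω < T / p}).toReal
          + (P ((fun ω => (Y ω, Z ω)) ⁻¹' (Iio (K / p) ×ˢ Iio (a * K / p))
              ∩ X ⁻¹' Iio (T / p))).toReal := by
      have step : P {ω | p * X ω + f (p * Y ω) (p / a * Z ω) < T}
          ≤ P {ω | X ω + Wε ω < T / p}
            + P ((fun ω => (Y ω, Z ω)) ⁻¹' (Iio (K / p) ×ˢ Iio (a * K / p))
              ∩ X ⁻¹' Iio (T / p)) := by
        calc P {ω | p * X ω + f (p * Y ω) (p / a * Z ω) < T}
            ≤ P (({ω | X ω + Wε ω < T / p}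
              ∪ ((fun ω => (Y ω, Z ω)) ⁻¹' (Iio (K / p) ×ˢ Iio (a * K / p))
                  ∩ X ⁻¹' Iio (T / p)))
              ∪ (X ⁻¹' Iio 0 ∪ (Y ⁻¹' Iio 0 ∪ Z ⁻¹' Iio 0))) := measure_mono hsub
          _ ≤ P ({ω | X ω + Wε ω < T / p}
              ∪ ((fun ω => (Y ω, Z ω)) ⁻¹' (Iio (K / p) ×ˢ Iio (a * K / p))
                  ∩ X ⁻¹' Iio (T / p)))
              + P (X ⁻¹' Iio 0 ∪ (Y ⁻¹' Iio 0 ∪ Z ⁻¹' Iio 0)) := measure_union_le _ _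
          _ = P ({ω | X ω + Wε ω < T / p}
              ∪ ((fun ω => (Y ω, Z ω)) ⁻¹' (Iio (K / p) ×ˢ Iio (a * K / p))
                  ∩ X ⁻¹' Iio (T / p))) := by rw [hN, add_zero]
          _ ≤ _ := measure_union_le _ _
      calc (P {ω | p * X ω + f (p * Y ω) (p / a * Z ω) < T}).toReal
          ≤ (P {ω | X ω + Wε ω < T / p}
            + P ((fun ω => (Y ω, Z ω)) ⁻¹' (Iio (K / p) ×ˢ Iio (a * K / p))
              ∩ X ⁻¹' Iio (T / p))).toReal :=
            ENNReal.toReal_mono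
              (ENNReal.add_ne_top.mpr ⟨measure_ne_top _ _, measure_ne_top _ _⟩) step
        _ = _ := ENNReal.toReal_add (measure_ne_top _ _) (measure_ne_top _ _)
    calc p ^ 2 * (P {ω | p * X ω + f (p * Y ω) (p / a * Z ω) < T}).toReal
        ≤ p ^ 2 * ((P {ω | X ω + Wε ω < T / p}).toReal
          + (P ((fun ω => (Y ω, Z ω)) ⁻¹' (Iio (K / p) ×ˢ Iio (a * K / p))
              ∩ X ⁻¹' Iio (T / p))).toReal) :=
          mul_le_mul_of_nonneg_left hm (by positivity)
      _ = _ := by ring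
  · -- lh < L + δ
    rw [add_zero, div_lt_iff₀ h1ε]
    have hεval : ε * (L + δ) = δ / 2 := by
      rw [hεdef]
      field_simp
    nlinarith
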